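/- Define e : ℝ × ℝ × ℝ → ℝ by e(a1, a2, a3) = 0 if a1 + a2 + a3 > 2; e(a1, a2, a3) = (1 - a1 - a2)*(1 - a3) if a3 ≥ a1 + a2 and a1 + a2 + a3 ≤ 2; and e(a1, a2, a3) = (a1 + a2 + a3 - 2)^2/4 if a3 < a1 + a2 and a1 + a2 + a3 ≤ 2. Then for fixed a1, a2 with 0 ≤ a1 ≤ a2, the function a3 ↦ e(a1, a2, a3) is antitone (nonincreasing) on the interval [a2, 1], and e(a1, a2, a3) ≥ 0 for all 0 ≤ a1 ≤ a2 ≤ a3 ≤ 1. -/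
import Mathlib


noncomputable def e : ℝ × ℝ × ℝ → ℝ := fun p =>
  if p.1 + p.2.1 + p.2.2 > 2 then 0
  else if p.2.2 ≥ p.1 + p.2.1 then (1 - p.1 - p.2.1) * (1 - p.2.2)
  else (p.1 + p.2.1 + p.2.2 - 2) ^ 2 / 4

theorem stmt_15 (a1 a2 : ℝ) (h0 : 0 ≤ a1) (h12 : a1 ≤ a2) :
    AntitoneOn (fun a3 => e (a1, a2, a3)) (Set.Icc a2 1) ∧
      ∀ a3, a2 ≤ a3 → a3 ≤ 1 → 0 ≤ e (a1, a2, a3) := by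
  constructor
  · intro x hx y hy hxy
    obtain ⟨hx1, hx2⟩ := hx
    obtain ⟨hy1, hy2⟩ := hy
    simp only [e]
    split_ifs with h1 h2 h3 h4 h5 h6 h7 <;> nlinarith [sq_nonneg (x - y), sq_nonneg (a1 + a2 + x - 2), sq_nonneg (a1 + a2 + y - 2), sq_nonneg (1 - a1 - a2)]
  · intro a3 h1 h2
    simp only [e]
    split_ifs with h3 h4 <;> nlinarith [sq_nonneg (a1 + a2 + a3 - 2)]
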